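/- Let H be a monoid equipped with a total order ⪯ such that x ≺ y implies xz ≺ yz and zx ≺ zy for all x, y, z ∈ H. Then for all nonempty finite subsets X, Y of H, the product set XY = {xy : x ∈ X, y ∈ Y} satisfies |XY| ≥ |X| + |Y| − 1. -/
import Mathlib


open Pointwise

/-- In a linearly ordered monoid (a monoid with a total order whose strict inequality
is compatible with multiplication on both sides), the product set of two nonempty
finite subsets `X`, `Y` satisfies `|XY| ≥ |X| + |Y| - 1`. -/
theorem stmt_8 {H : Type*} [Monoid H] [LinearOrder H] [DecidableEq H]
    (hr : ∀ x y z : H, x < y → x * z < y * z)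
    (hl : ∀ x y z : H, x < y → z * x < z * y)
    (X Y : Finset H) (hX : X.Nonempty) (hY : Y.Nonempty) :
    X.card + Y.card ≤ (X * Y).card + 1 := by
  set x0 := X.max' hX with hx0
  set y0 := Y.min' hY with hy0
  set A : Finset H := X.image (· * y0) with hA
  set B : Finset H := Y.image (x0 * ·) with hB
  have hAcard : A.card = X.card := by
    apply Finset.card_image_of_injective
    intro a b hab
    by_contra hne
    rcases lt_or_gt_of_ne hne with h | h
    · exact absurd hab (ne_of_lt (hr _ _ _ h))
    · exact absurd hab.symm (ne_of_lt (hr _ _ _ h))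
  have hBcard : B.card = Y.card := by
    apply Finset.card_image_of_injective
    intro a b hab
    by_contra hne
    rcases lt_or_gt_of_ne hne with h | h
    · exact absurd hab (ne_of_lt (hl _ _ _ h))
    · exact absurd hab.symm (ne_of_lt (hl _ _ _ h))
  have hmono_r : ∀ a b : H, a ≤ b → a * y0 ≤ b * y0 := by
    intro a b hab
    rcases eq_or_lt_of_le hab with rfl | h
    · exact le_refl _
    · exact (hr _ _ _ h).le
  have hmono_l : ∀ a b : H, a ≤ b → x0 * a ≤ x0 * b := by
    intro a b hab
    rcases eq_or_lt_of_le hab with rfl | h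
    · exact le_refl _
    · exact (hl _ _ _ h).le
  have hinter : A ∩ B ⊆ {x0 * y0} := by
    intro t ht
    rw [Finset.mem_inter] at ht
    obtain ⟨htA, htB⟩ := ht
    rw [hA, Finset.mem_image] at htA
    rw [hB, Finset.mem_image] at htB
    obtain ⟨x, hx, rfl⟩ := htA
    obtain ⟨y, hy, hxy⟩ := htB
    have h1 : x * y0 ≤ x0 * y0 := hmono_r _ _ (X.le_max' x hx)
    have h2 : x0 * y0 ≤ x * y0 := hxy ▸ hmono_l _ _ (Y.min'_le y hy)
    simp [le_antisymm h1 h2]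
  have hmem : x0 * y0 ∈ A ∩ B := by
    rw [Finset.mem_inter]
    constructor
    · exact Finset.mem_image_of_mem _ (X.max'_mem hX)
    · exact Finset.mem_image_of_mem _ (Y.min'_mem hY)
  have hintercard : (A ∩ B).card = 1 := by
    have := Finset.card_le_card hinter
    simp only [Finset.card_singleton] at this
    have h1 : 1 ≤ (A ∩ B).card := Finset.card_pos.mpr ⟨_, hmem⟩
    omega
  have hsub : A ∪ B ⊆ X * Y := by
    intro t ht
    rw [Finset.mem_union] at ht
    rcases ht with h | h
    · rw [hA, Finset.mem_image] at h
      obtain ⟨x, hx, rfl⟩ := h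
      exact Finset.mul_mem_mul hx (Y.min'_mem hY)
    · rw [hB, Finset.mem_image] at h
      obtain ⟨y, hy, rfl⟩ := h
      exact Finset.mul_mem_mul (X.max'_mem hX) hy
  have := Finset.card_union_add_card_inter A B
  have hle := Finset.card_le_card hsub
  omega
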